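/- arXiv:2509.13897 — 3 statements merged into one kernel-verified Lean document; each statement's English description precedes it below -/
import Mathlib

section
/- For d ≥ 2 and m ≥ 1, the d-Narayana polynomial N_{d,m}(x) := (1-x)^{md+1} · ∑_{n=0}^∞ [∏_{i=1}^{d} (m+i)_n / (i)_n] xⁿ is a polynomial of degree exactly (d-1)(m-1). -/
open Polynomial

/-- Pochhammer symbol (rising factorial) `(a)_n` for real `a`. -/
noncomputable def asc (a : ℝ) (n : ℕ) : ℝ := (ascPochhammer ℝ n).eval a

open Finset fwdDiff

lemma asc_pos {a : ℝ} (ha : 0 < a) (n : ℕ) : 0 < asc a n := ascPochhammer_pos n a ha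

lemma asc_succ (a : ℝ) (n : ℕ) : asc a (n+1) = asc a n * (a + n) := by
  simpa [asc] using ascPochhammer_succ_eval n a

lemma asc_ne_zero_of_neg {a : ℝ} : ∀ {n : ℕ}, a + n ≤ 0 → asc a n ≠ 0 := by
  intro n
  induction n with
  | zero => intro _; simp [asc]
  | succ n ih =>
    intro h
    push_cast at h
    rw [asc_succ]
    have h1 : a + n < 0 := by linarith
    exact mul_ne_zero (ih (by linarith)) (ne_of_lt h1)

lemma asc_add (a : ℝ) (n m : ℕ) : asc a (n + m) = asc a n * asc (a + n) m := by
  have := congrArg (Polynomial.eval a) (ascPochhammer_mul (S := ℝ) n m)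
  simpa [asc, Polynomial.eval_comp] using this.symm

lemma asc_neg_nat_zero {m j : ℕ} (hj : j < m) : asc (-(j : ℝ)) m = 0 := by
  have hm : m = j + (m - j) := by omega
  rw [hm, asc_add]
  have : asc (-(j:ℝ) + j) (m - j) = 0 := by
    have : (-(j:ℝ) + j) = 0 := by ring
    rw [this]
    simp [asc, ascPochhammer_eval_zero, Nat.sub_eq_zero_iff_le, not_le.mpr hj]
  rw [this, mul_zero]
open Polynomial Finset fwdDiff

lemma fd_poly (p : ℝ[X]) (y : ℝ) :
    fwdDiff (1:ℝ) (fun t => p.eval t) y = (p.comp (X + C 1) - p).eval y := by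
  simp [fwdDiff, Polynomial.eval_comp]

lemma fd_deg {p : ℝ[X]} {n : ℕ} (hp : p.natDegree ≤ n + 1) :
    (p.comp (X + C 1) - p).natDegree ≤ n := by
  by_cases h0 : p.natDegree = 0
  · obtain ⟨c, rfl⟩ := Polynomial.natDegree_eq_zero.mp h0
    simp
  · have hp0 : p ≠ 0 := fun h => h0 (by simp [h])
    have hq : (X + C (1:ℝ)).natDegree = 1 := natDegree_X_add_C 1
    have hcompdeg : (p.comp (X + C 1)).natDegree = p.natDegree := by
      rw [natDegree_comp, hq, mul_one]
    have hcomp0 : p.comp (X + C 1) ≠ 0 := fun h => by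
      rw [h, natDegree_zero] at hcompdeg; exact h0 hcompdeg.symm
    have hdeg : (p.comp (X + C 1)).degree = p.degree := by
      rw [degree_eq_natDegree hcomp0, degree_eq_natDegree hp0, hcompdeg]
    have hlc : (p.comp (X + C 1)).leadingCoeff = p.leadingCoeff := by
      have h1 : ((X : ℝ[X]) + C 1).leadingCoeff = 1 := monic_X_add_C 1
      rw [Polynomial.leadingCoeff_comp (by rw [hq]; exact one_ne_zero), h1, one_pow, mul_one]
    have hlt := Polynomial.degree_sub_lt hdeg hcomp0 hlc
    by_cases hz : p.comp (X + C 1) - p = 0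
    · rw [hz]; simp
    · have h1 : (p.comp (X + C 1) - p).natDegree < p.natDegree := by
        rw [← hcompdeg] at *
        exact Polynomial.natDegree_lt_natDegree hz hlt
      omega

lemma fd_iter_zero : ∀ (n : ℕ) (p : ℝ[X]), p.natDegree ≤ n → ∀ y : ℝ,
    (fwdDiff (1:ℝ))^[n+1] (fun t => p.eval t) y = 0 := by
  intro n
  induction n with
  | zero =>
    intro p hp y
    obtain ⟨c, rfl⟩ := Polynomial.natDegree_eq_zero.mp (Nat.le_zero.mp hp)
    simp [fwdDiff]
  | succ n ih =>
    intro p hp y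
    rw [Function.iterate_succ_apply]
    have h1 : fwdDiff (1:ℝ) (fun t => p.eval t) = fun t => (p.comp (X + C 1) - p).eval t :=
      funext (fd_poly p)
    rw [h1]
    exact ih _ (fd_deg hp) y

lemma fd_sum {n : ℕ} {p : ℝ[X]} (hp : p.natDegree ≤ n) (y : ℝ) :
    ∑ j ∈ range (n+2), (-1:ℝ)^j * ((n+1).choose j) * p.eval (y - j) = 0 := by
  have h0 := fd_iter_zero n p hp (y - (n+1))
  rw [fwdDiff_iter_eq_sum_shift] at h0
  rw [← Finset.sum_range_reflect, ← h0]
  refine Finset.sum_congr rfl fun k hk => ?_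
  have hk' : k ≤ n + 1 := by simpa [Nat.lt_succ_iff] using Finset.mem_range.mp hk
  have e1 : n + 2 - 1 - k = n + 1 - k := by omega
  rw [e1, Nat.choose_symm hk']
  have e3 : y - ((n + 1 - k : ℕ) : ℝ) = y - ((n:ℝ) + 1) + k • (1:ℝ) := by
    push_cast [Nat.cast_sub hk']
    ring
  rw [e3, zsmul_eq_mul]
  push_cast
  ring
open Polynomial Finset fwdDiff

lemma summ_poly (p : ℝ[X]) {x : ℝ} (hx : |x| < 1) :
    Summable (fun n : ℕ => p.eval (n : ℝ) * x ^ n) := by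
  have hx' : ‖x‖ < 1 := by rwa [Real.norm_eq_abs]
  have h : (fun n : ℕ => p.eval (n : ℝ) * x ^ n)
      = fun n : ℕ => ∑ k ∈ range (p.natDegree + 1), p.coeff k * ((n : ℝ) ^ k * x ^ n) := by
    funext n
    rw [Polynomial.eval_eq_sum_range, Finset.sum_mul]
    exact Finset.sum_congr rfl fun k _ => by ring
  rw [h]
  exact summable_sum fun k _ =>
    (summable_pow_mul_geometric_of_norm_lt_one k hx').mul_left _

noncomputable def NarB (D j : ℕ) : ℝ := (-1) ^ j * ((D + 1).choose j)

noncomputable def NarC (P : ℝ[X]) (D N : ℕ) : ℝ :=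
  ∑ j ∈ range (D + 2), if j ≤ N then NarB D j * P.eval ((N - j : ℕ) : ℝ) else 0

lemma narC_eq_zero {P : ℝ[X]} {D K : ℕ} (hdeg : P.natDegree ≤ D)
    (hroots : ∀ t : ℕ, 1 ≤ t → t ≤ D - K → P.eval (-(t : ℝ)) = 0)
    (hKD : K ≤ D) {N : ℕ} (hN : K + 1 ≤ N) : NarC P D N = 0 := by
  have hfd := fd_sum hdeg (N : ℝ)
  rw [NarC]
  refine Eq.trans ?_ hfd
  refine Finset.sum_congr rfl fun j hj => ?_
  have hj' : j ≤ D + 1 := by simpa [Nat.lt_succ_iff] using Finset.mem_range.mp hj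
  by_cases h : j ≤ N
  · rw [if_pos h, NarB]
    congr 1
    push_cast [Nat.cast_sub h]
    ring
  · rw [if_neg h]
    have hNj : (N : ℝ) - j = -((j - N : ℕ) : ℝ) := by
      push_cast [Nat.cast_sub (le_of_not_ge h)]
      ring
    rw [hNj, hroots (j - N) (by omega) (by omega)]
    ring

lemma narC_top {P : ℝ[X]} {D K : ℕ} (hdeg : P.natDegree ≤ D)
    (hroots : ∀ t : ℕ, 1 ≤ t → t ≤ D - K → P.eval (-(t : ℝ)) = 0)
    (hKD : K ≤ D) : NarC P D K = (-1) ^ D * P.eval ((K : ℝ) - (D + 1)) := by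
  have hfd := fd_sum hdeg (K : ℝ)
  have hsplit : ∀ j ∈ range (D + 2), (-1:ℝ)^j * ((D+1).choose j) * P.eval ((K:ℝ) - j)
      = (if j ≤ K then NarB D j * P.eval ((K - j : ℕ) : ℝ) else 0)
        + (if j = D + 1 then (-1:ℝ)^(D+1) * P.eval ((K:ℝ) - (D+1 : ℕ)) else 0) := by
    intro j hj
    have hj' : j ≤ D + 1 := by simpa [Nat.lt_succ_iff] using Finset.mem_range.mp hj
    by_cases h1 : j ≤ K
    · rw [if_pos h1, if_neg (by omega), NarB, add_zero]
      have : ((K - j : ℕ) : ℝ) = (K : ℝ) - j := by push_cast [Nat.cast_sub h1]; ring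
      rw [this]
    · by_cases h2 : j = D + 1
      · subst h2
        rw [if_neg h1, if_pos rfl, Nat.choose_self, zero_add]
        push_cast
        ring
      · rw [if_neg h1, if_neg h2, add_zero]
        have hNj : (K : ℝ) - j = -((j - K : ℕ) : ℝ) := by
          push_cast [Nat.cast_sub (le_of_not_ge h1)]
          ring
        rw [hNj, hroots (j - K) (by omega) (by omega)]
        ring
  rw [Finset.sum_congr rfl hsplit, Finset.sum_add_distrib] at hfd
  have h2 : ∑ j ∈ range (D + 2),
      (if j = D + 1 then (-1:ℝ)^(D+1) * P.eval ((K:ℝ) - (D+1 : ℕ)) else 0)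
      = (-1:ℝ)^(D+1) * P.eval ((K:ℝ) - (D+1 : ℕ)) := by
    rw [Finset.sum_ite_eq' (range (D+2)) (D+1)]
    rw [if_pos (Finset.mem_range.mpr (by omega))]
  rw [h2] at hfd
  have hC : NarC P D K = ∑ j ∈ range (D + 2),
      (if j ≤ K then NarB D j * P.eval ((K - j : ℕ) : ℝ) else 0) := rfl
  have hpow : ((-1:ℝ))^(D+1) = -(-1:ℝ)^D := by rw [pow_succ]; ring
  rw [hpow] at hfd
  rw [hC]
  push_cast at hfd ⊢
  linarith

lemma nar_eval {P : ℝ[X]} {D K : ℕ}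
    (hc : ∀ N, K + 1 ≤ N → NarC P D N = 0) {x : ℝ} (hx : |x| < 1) :
    (1 - x) ^ (D + 1) * ∑' n : ℕ, P.eval (n : ℝ) * x ^ n
      = ∑ k ∈ range (K + 1), NarC P D k * x ^ k := by
  have hS := summ_poly P hx
  have hpow : (1 - x) ^ (D + 1) = ∑ j ∈ range (D + 2), NarB D j * x ^ j := by
    have h := add_pow (-x) 1 (D + 1)
    rw [show -x + 1 = 1 - x by ring] at h
    rw [h]
    exact Finset.sum_congr rfl fun j _ => by rw [NarB]; ring
  set G : ℕ → ℕ → ℝ :=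
    fun j N => if j ≤ N then NarB D j * P.eval ((N - j : ℕ) : ℝ) * x ^ N else 0 with hG
  have hGshift : ∀ j, (fun n => G j (n + j))
      = fun n : ℕ => (NarB D j * x ^ j) * (P.eval (n : ℝ) * x ^ n) := by
    intro j
    funext n
    simp only [hG]
    rw [if_pos (Nat.le_add_left j n), Nat.add_sub_cancel, pow_add]
    ring
  have hGsm : ∀ j, Summable (G j) := fun j =>
    (summable_nat_add_iff j).mp (by rw [hGshift j]; exact hS.mul_left _)
  have hGsum : ∀ j, ∑' N, G j N
      = NarB D j * x ^ j * ∑' n : ℕ, P.eval (n : ℝ) * x ^ n := by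
    intro j
    have hinj : Function.Injective (fun n : ℕ => n + j) := add_left_injective j
    have hsupp : Function.support (G j) ⊆ Set.range (fun n : ℕ => n + j) := by
      intro N hN
      by_cases h : j ≤ N
      · exact ⟨N - j, by simpa using Nat.sub_add_cancel h⟩
      · exact absurd (by simp only [hG]; rw [if_neg h]) hN
    rw [← Function.Injective.tsum_eq hinj hsupp]
    calc ∑' (n : ℕ), G j (n + j)
        = ∑' (n : ℕ), (NarB D j * x ^ j) * (P.eval (n : ℝ) * x ^ n) := by
          exact tsum_congr fun n => congrFun (hGshift j) n
      _ = NarB D j * x ^ j * ∑' n : ℕ, P.eval (n : ℝ) * x ^ n := tsum_mul_left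
  calc (1 - x) ^ (D + 1) * ∑' n : ℕ, P.eval (n : ℝ) * x ^ n
      = ∑ j ∈ range (D + 2), NarB D j * x ^ j * ∑' n : ℕ, P.eval (n : ℝ) * x ^ n := by
        rw [hpow, Finset.sum_mul]
    _ = ∑ j ∈ range (D + 2), ∑' N, G j N :=
        Finset.sum_congr rfl fun j _ => (hGsum j).symm
    _ = ∑' N, ∑ j ∈ range (D + 2), G j N := (Summable.tsum_finsetSum fun j _ => hGsm j).symm
    _ = ∑' N : ℕ, NarC P D N * x ^ N := by
        refine tsum_congr fun N => ?_
        rw [NarC, Finset.sum_mul]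
        refine Finset.sum_congr rfl fun j _ => ?_
        simp only [hG]
        split_ifs <;> ring
    _ = ∑ k ∈ range (K + 1), NarC P D k * x ^ k := by
        refine tsum_eq_sum fun N hN => ?_
        rw [hc N (by simpa [Nat.lt_succ_iff] using fun h => hN (Finset.mem_range.mpr h))]
        ring

theorem stmt_15 (d m : ℕ) (hd : 2 ≤ d) (hm : 1 ≤ m) (N : Polynomial ℝ)
    (hN : ∀ x : ℝ, |x| < 1 →
      N.eval x = (1 - x) ^ (m * d + 1) *
        ∑' n : ℕ, (∏ i ∈ Finset.range d,
          asc ((m : ℝ) + i + 1) n / asc ((i : ℝ) + 1) n) * x ^ n) :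
    N.natDegree = (d - 1) * (m - 1) := by
  obtain ⟨d', rfl⟩ : ∃ d', d = d' + 2 := ⟨d - 2, by omega⟩
  obtain ⟨m', rfl⟩ : ∃ m', m = m' + 1 := ⟨m - 1, by omega⟩
  set K := (d' + 1) * m' with hK
  set D := (m' + 1) * (d' + 2) with hDdef
  have hKD : K + (m' + d' + 3) = D + 1 := by rw [hK, hDdef]; ring
  set P : ℝ[X] := ∏ i ∈ Finset.range (d' + 2),
      (C ((asc ((i : ℝ) + 1) (m' + 1))⁻¹) *
        (ascPochhammer ℝ (m' + 1)).comp (X + C ((i : ℝ) + 1))) with hP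
  have hpos : ∀ (i : ℕ) (n : ℕ), (0 : ℝ) < asc ((i : ℝ) + 1) n :=
    fun i n => asc_pos (by positivity) n
  have hPeval : ∀ t : ℝ, P.eval t = ∏ i ∈ Finset.range (d' + 2),
      (asc ((i : ℝ) + 1) (m' + 1))⁻¹ * asc (t + ((i : ℝ) + 1)) (m' + 1) := by
    intro t
    rw [hP, eval_prod]
    exact Finset.prod_congr rfl fun i _ => by simp [asc, eval_comp]
  have hPdeg : P.natDegree ≤ D := by
    rw [hP]
    refine le_trans (Polynomial.natDegree_prod_le _ _) ?_
    have hb : ∀ i ∈ Finset.range (d' + 2),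
        ((C ((asc ((i : ℝ) + 1) (m' + 1))⁻¹) *
          (ascPochhammer ℝ (m' + 1)).comp (X + C ((i : ℝ) + 1)))).natDegree ≤ m' + 1 := by
      intro i _
      refine le_trans (Polynomial.natDegree_C_mul_le _ _) ?_
      rw [natDegree_comp, ascPochhammer_natDegree, natDegree_X_add_C, mul_one]
    refine le_trans (Finset.sum_le_sum hb) ?_
    rw [Finset.sum_const, Finset.card_range, smul_eq_mul, hDdef]
    exact Nat.le_of_eq (by ring)
  have hAn : ∀ n : ℕ, (∏ i ∈ Finset.range (d' + 2),
      asc (((m' + 1 : ℕ) : ℝ) + i + 1) n / asc ((i : ℝ) + 1) n) = P.eval (n : ℝ) := by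
    intro n
    rw [hPeval]
    refine Finset.prod_congr rfl fun i _ => ?_
    have key : asc ((i : ℝ) + 1) n * asc (((i : ℝ) + 1) + n) (m' + 1)
        = asc ((i : ℝ) + 1) (m' + 1) * asc (((i : ℝ) + 1) + (m' + 1 : ℕ)) n := by
      rw [← asc_add, ← asc_add, Nat.add_comm]
    have h1 : asc ((i : ℝ) + 1) n ≠ 0 := (hpos i n).ne'
    have h2 : asc ((i : ℝ) + 1) (m' + 1) ≠ 0 := (hpos i _).ne'
    have e1 : ((m' + 1 : ℕ) : ℝ) + i + 1 = ((i : ℝ) + 1) + ((m' + 1 : ℕ) : ℝ) := by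
      push_cast; ring
    have e2 : (n : ℝ) + ((i : ℝ) + 1) = ((i : ℝ) + 1) + (n : ℝ) := by ring
    rw [e1, e2, div_eq_iff h1, inv_mul_eq_div, div_mul_eq_mul_div, eq_div_iff h2]
    linear_combination -key
  have hroots : ∀ t : ℕ, 1 ≤ t → t ≤ D - K → P.eval (-(t : ℝ)) = 0 := by
    intro t ht1 ht2
    have ht2' : t ≤ m' + d' + 2 := by omega
    rw [hPeval]
    obtain ⟨i0, j', hi0lt, hjm, ht⟩ : ∃ i0 j', i0 < d' + 2 ∧ j' < m' + 1 ∧ t = j' + i0 + 1 :=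
      ⟨min (t - 1) (d' + 1), t - 1 - min (t - 1) (d' + 1), by omega, by omega, by omega⟩
    refine Finset.prod_eq_zero (Finset.mem_range.mpr hi0lt) ?_
    have harg : -(t : ℝ) + ((i0 : ℝ) + 1) = -((j' : ℕ) : ℝ) := by
      rw [ht]
      push_cast
      ring
    rw [harg, asc_neg_nat_zero hjm, mul_zero]
  have hPne : P.eval ((K : ℝ) - ((D : ℕ) + 1)) ≠ 0 := by
    have hKDe : (K : ℝ) - ((D : ℕ) + 1) = -(((m' + d' + 3 : ℕ)) : ℝ) := by
      have := hKD
      have hc : ((K : ℕ) : ℝ) + ((m' + d' + 3 : ℕ) : ℝ) = ((D : ℕ) : ℝ) + 1 := by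
        exact_mod_cast congrArg (fun z : ℕ => (z : ℝ)) this
      linarith
    rw [hKDe, hPeval]
    rw [Finset.prod_ne_zero_iff]
    intro i hi
    refine mul_ne_zero (inv_ne_zero (hpos i (m' + 1)).ne') ?_
    apply asc_ne_zero_of_neg
    have hii : i ≤ d' + 1 := by
      have := Finset.mem_range.mp hi
      omega
    have hi' : (i : ℝ) ≤ (d' : ℝ) + 1 := by exact_mod_cast hii
    push_cast
    linarith
  have hc0 : ∀ n, K + 1 ≤ n → NarC P D n = 0 :=
    fun n hn => narC_eq_zero hPdeg hroots (by omega) hn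
  set Q : ℝ[X] := ∑ k ∈ Finset.range (K + 1), C (NarC P D k) * X ^ k with hQ
  have hQeval : ∀ x : ℝ, Q.eval x = ∑ k ∈ Finset.range (K + 1), NarC P D k * x ^ k := by
    intro x
    rw [hQ, Polynomial.eval_finset_sum]
    exact Finset.sum_congr rfl fun k _ => by simp
  have hNQ : N = Q := by
    apply Polynomial.eq_of_infinite_eval_eq
    refine Set.Infinite.mono ?_ (Set.Ioo_infinite (show (-1:ℝ) < 1 by norm_num))
    intro x hx
    have hx' : |x| < 1 := abs_lt.mpr ⟨hx.1, hx.2⟩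
    show N.eval x = Q.eval x
    rw [hN x hx', hQeval x, ← nar_eval hc0 hx']
    congr 1
    exact tsum_congr fun n => by rw [hAn n]
  have hcK : NarC P D K ≠ 0 := by
    rw [narC_top hPdeg hroots (by omega)]
    exact mul_ne_zero (pow_ne_zero _ (by norm_num)) (by exact_mod_cast hPne)
  have hle : Q.natDegree ≤ K := by
    rw [hQ]
    refine Polynomial.natDegree_sum_le_of_forall_le _ _ fun k hk => ?_
    refine le_trans (Polynomial.natDegree_C_mul_le _ _) ?_
    rw [Polynomial.natDegree_X_pow]
    exact Nat.lt_succ_iff.mp (Finset.mem_range.mp hk)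
  have hcoeff : Q.coeff K = NarC P D K := by
    rw [hQ, Polynomial.finset_sum_coeff]
    simp only [Polynomial.coeff_C_mul, Polynomial.coeff_X_pow, mul_ite, mul_one, mul_zero]
    rw [Finset.sum_ite_eq (Finset.range (K + 1)) K]
    rw [if_pos (Finset.mem_range.mpr (Nat.lt_succ_self K))]
  have hQdeg : Q.natDegree = K :=
    le_antisymm hle (Polynomial.le_natDegree_of_ne_zero (by rw [hcoeff]; exact hcK))
  rw [hNQ, hQdeg, hK]
  simp
end

section
/- For d ≥ 2 and m ≥ 1, the value of the d-Narayana polynomial at 1 equals the multidimensional Catalan number: N_{d,m}(1) = (md)! · ∏_{j=0}^{d-1} j!/(m+j)!. -/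
open Polynomial

open Filter Topology Finset

lemma asc_eq_prod (a : ℝ) (n : ℕ) : asc a n = ∏ k ∈ range n, (a + k) := by
  induction n with
  | zero => simp [asc]
  | succ n ih =>
    rw [asc, ascPochhammer_succ_right, eval_mul, ← asc, ih, prod_range_succ]
    simp

lemma fact_prod (c m : ℕ) :
    (((c + m).factorial : ℝ)) = (c.factorial : ℝ) * ∏ j ∈ range m, ((c : ℝ) + j + 1) := by
  induction m with
  | zero => simp
  | succ m ih =>
    rw [prod_range_succ, ← mul_assoc, ← ih, ← Nat.add_assoc, Nat.factorial_succ]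
    push_cast
    ring

lemma asc_nat (c n : ℕ) : asc ((c : ℝ) + 1) n = ((c + n).factorial : ℝ) / (c.factorial : ℝ) := by
  rw [asc_eq_prod, fact_prod]
  rw [mul_comm, mul_div_assoc, div_self (by exact_mod_cast c.factorial_ne_zero), mul_one]
  exact prod_congr rfl fun k _ => by ring

lemma summable_poly (P : ℝ[X]) {x : ℝ} (hx : |x| < 1) :
    Summable (fun n : ℕ => P.eval (n : ℝ) * x ^ n) := by
  have h : ∀ n : ℕ, P.eval (n : ℝ) * x ^ n
      = ∑ k ∈ range (P.natDegree + 1), P.coeff k * ((n : ℝ) ^ k * x ^ n) := by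
    intro n
    rw [Polynomial.eval_eq_sum_range, Finset.sum_mul]
    exact Finset.sum_congr rfl fun k _ => by ring
  apply Summable.congr _ (fun n => (h n).symm)
  exact summable_sum fun k _ =>
    ((summable_pow_mul_geometric_of_norm_lt_one (R := ℝ) k (by rwa [Real.norm_eq_abs])).mul_left _)

lemma comp_coeff (P : ℝ[X]) (M k : ℕ) (h : P.natDegree < M) :
    (P.comp (X + 1)).coeff k = ∑ j ∈ range M, P.coeff j * (j.choose k : ℕ) := by
  have hP : P = ∑ j ∈ range M, C (P.coeff j) * X ^ j := by
    conv_lhs => rw [P.as_sum_range' M h]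
    simp [C_mul_X_pow_eq_monomial]
  conv_lhs => rw [hP]
  rw [Polynomial.sum_comp, finset_sum_coeff]
  exact sum_congr rfl fun j _ => by
    rw [mul_comp, C_comp, X_pow_comp, coeff_C_mul, coeff_X_add_one_pow]

lemma delta_coeff (D : ℕ) (P : ℝ[X]) (hP : P.natDegree ≤ D + 1) :
    (P.comp (X + 1) - P).coeff D = ((D : ℝ) + 1) * P.coeff (D + 1) := by
  rw [coeff_sub, comp_coeff P (D + 2) D (by omega)]
  have hsum : ∑ j ∈ range (D + 2), P.coeff j * ((j.choose D : ℕ) : ℝ)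
      = P.coeff D + ((D : ℝ) + 1) * P.coeff (D + 1) := by
    rw [Finset.sum_range_succ, Finset.sum_range_succ]
    have hz : ∀ j ∈ range D, P.coeff j * ((j.choose D : ℕ) : ℝ) = 0 := by
      intro j hj
      rw [Nat.choose_eq_zero_of_lt (mem_range.mp hj)]
      simp
    rw [Finset.sum_eq_zero hz, Nat.choose_self, Nat.choose_succ_self_right]
    push_cast
    ring
  rw [hsum]
  ring

lemma delta_deg (D : ℕ) (P : ℝ[X]) (hP : P.natDegree ≤ D + 1) :
    (P.comp (X + 1) - P).natDegree ≤ D := by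
  rw [natDegree_le_iff_coeff_eq_zero]
  intro N hN
  rw [coeff_sub, comp_coeff P (D + 2) N (by omega)]
  have hs : ∑ j ∈ range (D + 2), P.coeff j * ((j.choose N : ℕ) : ℝ)
      = ∑ j ∈ range (D + 2), (if j = N then P.coeff N else 0) := by
    refine sum_congr rfl fun j hj => ?_
    rcases eq_or_ne j N with rfl | h
    · simp
    · have hj' : j < N := lt_of_le_of_ne (by have := mem_range.mp hj; omega) h
      rw [Nat.choose_eq_zero_of_lt hj']
      simp [h]
  rw [hs, Finset.sum_ite_eq' (range (D + 2)) N (fun _ => P.coeff N)]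
  by_cases hN2 : N ∈ range (D + 2)
  · simp [hN2]
  · have : P.coeff N = 0 := coeff_eq_zero_of_natDegree_lt
      (by simp [Finset.mem_range] at hN2; omega)
    simp [hN2, this]

lemma Ioo_mem : Set.Ioo (-1 : ℝ) 1 ∈ 𝓝[<] (1 : ℝ) := by
  apply mem_nhdsWithin.mpr
  exact ⟨Set.Ioi (-1), isOpen_Ioi, by norm_num,
    fun x hx => ⟨hx.1, hx.2⟩⟩

lemma key (D : ℕ) : ∀ P : ℝ[X], P.natDegree ≤ D →
    Tendsto (fun x : ℝ => (1 - x) ^ (D + 1) * ∑' n : ℕ, P.eval (n : ℝ) * x ^ n)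
      (𝓝[<] (1 : ℝ)) (𝓝 ((D.factorial : ℝ) * P.coeff D)) := by
  induction D with
  | zero =>
    intro P hP
    have heq : ∀ x ∈ Set.Ioo (-1 : ℝ) 1,
        P.coeff 0 = (1 - x) ^ (0 + 1) * ∑' n : ℕ, P.eval (n : ℝ) * x ^ n := by
      intro x hx
      have hx' : |x| < 1 := abs_lt.mpr ⟨hx.1, hx.2⟩
      have hPc : ∀ n : ℕ, P.eval (n : ℝ) = P.coeff 0 := by
        intro n
        conv_lhs => rw [Polynomial.eq_C_of_natDegree_le_zero hP]
        simp
      have : ∑' n : ℕ, P.eval (n : ℝ) * x ^ n = P.coeff 0 * (1 - x)⁻¹ := by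
        rw [show (fun n : ℕ => P.eval (n : ℝ) * x ^ n) = fun n : ℕ => P.coeff 0 * x ^ n from
          funext fun n => by rw [hPc], tsum_mul_left, tsum_geometric_of_abs_lt_one hx']
      rw [this, pow_one]
      have h1 : (1 : ℝ) - x ≠ 0 := by
        intro h; rw [sub_eq_zero] at h; exact absurd h.symm (ne_of_lt hx.2)
      field_simp
    have hfac : ((Nat.factorial 0 : ℕ) : ℝ) * P.coeff 0 = P.coeff 0 := by simp
    rw [show (𝓝 ((Nat.factorial 0 : ℕ) * P.coeff 0)) = 𝓝 (P.coeff 0) by rw [hfac]]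
    exact Tendsto.congr' (eventually_of_mem Ioo_mem heq) tendsto_const_nhds
  | succ D ih =>
    intro P hP
    set Q := P.comp (X + 1) - P with hQdef
    have hQdeg := delta_deg D P hP
    have hQco := delta_coeff D P hP
    have hQeval : ∀ n : ℕ, Q.eval (n : ℝ) = P.eval (((n + 1 : ℕ) : ℝ)) - P.eval (n : ℝ) := by
      intro n
      rw [hQdef, eval_sub, eval_comp, eval_add, eval_X, eval_one]
      push_cast
      ring_nf
    have heq : ∀ x ∈ Set.Ioo (-1 : ℝ) 1,
        (1 - x) ^ (D + 1) * P.eval 0 + x * ((1 - x) ^ (D + 1) * ∑' n : ℕ, Q.eval (n : ℝ) * x ^ n)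
          = (1 - x) ^ (D + 1 + 1) * ∑' n : ℕ, P.eval (n : ℝ) * x ^ n := by
      intro x hx
      have hx' : |x| < 1 := abs_lt.mpr ⟨hx.1, hx.2⟩
      have hsP := summable_poly P hx'
      have hsQ := summable_poly Q hx'
      have hsP1 : Summable (fun n : ℕ => P.eval (((n + 1 : ℕ) : ℝ)) * x ^ (n + 1)) :=
        (summable_nat_add_iff (f := fun n : ℕ => P.eval (n : ℝ) * x ^ n) 1).2 hsP
      have hkey : (1 - x) * ∑' n : ℕ, P.eval (n : ℝ) * x ^ n
          = P.eval 0 + x * ∑' n : ℕ, Q.eval (n : ℝ) * x ^ n := by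
        have e1 : x * ∑' n : ℕ, Q.eval (n : ℝ) * x ^ n
            = ∑' n : ℕ, (P.eval (((n + 1 : ℕ) : ℝ)) * x ^ (n + 1)
                - x * (P.eval (n : ℝ) * x ^ n)) := by
          rw [← tsum_mul_left]
          congr 1
          funext n
          rw [hQeval n]
          ring
        have e2 : ∑' n : ℕ, (P.eval (((n + 1 : ℕ) : ℝ)) * x ^ (n + 1)
              - x * (P.eval (n : ℝ) * x ^ n))
            = (∑' n : ℕ, P.eval (((n + 1 : ℕ) : ℝ)) * x ^ (n + 1))
              - x * ∑' n : ℕ, P.eval (n : ℝ) * x ^ n := by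
          rw [Summable.tsum_sub hsP1 (hsP.mul_left x), tsum_mul_left]
        have e3 : ∑' n : ℕ, P.eval (((n + 1 : ℕ) : ℝ)) * x ^ (n + 1)
            = (∑' n : ℕ, P.eval (n : ℝ) * x ^ n) - P.eval 0 := by
          have := Summable.tsum_eq_zero_add hsP
          push_cast at this ⊢
          rw [this]
          simp
        rw [e1, e2, e3]
        ring
      calc (1 - x) ^ (D + 1) * P.eval 0
            + x * ((1 - x) ^ (D + 1) * ∑' n : ℕ, Q.eval (n : ℝ) * x ^ n)
          = (1 - x) ^ (D + 1) * (P.eval 0 + x * ∑' n : ℕ, Q.eval (n : ℝ) * x ^ n) := by ring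
        _ = (1 - x) ^ (D + 1) * ((1 - x) * ∑' n : ℕ, P.eval (n : ℝ) * x ^ n) := by rw [hkey]
        _ = (1 - x) ^ (D + 1 + 1) * ∑' n : ℕ, P.eval (n : ℝ) * x ^ n := by ring
    have h1 : Tendsto (fun x : ℝ => (1 - x) ^ (D + 1) * P.eval 0) (𝓝[<] (1 : ℝ)) (𝓝 0) := by
      have hc : Continuous (fun x : ℝ => (1 - x) ^ (D + 1) * P.eval 0) := by continuity
      have := (hc.tendsto 1).mono_left (nhdsWithin_le_nhds (s := Set.Iio (1 : ℝ)))
      simpa using this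
    have h2 : Tendsto (fun x : ℝ =>
          x * ((1 - x) ^ (D + 1) * ∑' n : ℕ, Q.eval (n : ℝ) * x ^ n))
        (𝓝[<] (1 : ℝ)) (𝓝 (1 * ((D.factorial : ℝ) * Q.coeff D))) :=
      Tendsto.mul (tendsto_id.mono_right nhdsWithin_le_nhds) (ih Q hQdeg)
    have h3 := h1.add h2
    have hval : (0 : ℝ) + 1 * ((D.factorial : ℝ) * Q.coeff D)
        = ((D + 1).factorial : ℝ) * P.coeff (D + 1) := by
      rw [hQco, Nat.factorial_succ]
      push_cast
      ring
    rw [hval] at h3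
    exact Tendsto.congr' (eventually_of_mem Ioo_mem heq) h3

lemma ratio_eq (m i n : ℕ) :
    asc ((m : ℝ) + i + 1) n / asc ((i : ℝ) + 1) n
      = ((i.factorial : ℝ) / ((m + i).factorial : ℝ)) * ∏ j ∈ range m, ((n : ℝ) + i + j + 1) := by
  have h1 : ((m : ℝ) + i + 1) = (((m + i : ℕ)) : ℝ) + 1 := by push_cast; ring
  rw [h1, asc_nat, asc_nat]
  rw [show m + i + n = i + n + m from by omega]
  have h2 : (((i + n + m).factorial : ℕ) : ℝ)
      = ((i + n).factorial : ℝ) * ∏ j ∈ range m, ((n : ℝ) + i + j + 1) := by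
    rw [fact_prod (i + n) m]
    congr 1
    exact prod_congr rfl fun j _ => by push_cast; ring
  rw [h2]
  have f1 : ((i.factorial : ℕ) : ℝ) ≠ 0 := by exact_mod_cast i.factorial_ne_zero
  have f2 : (((m + i).factorial : ℕ) : ℝ) ≠ 0 := by exact_mod_cast (m + i).factorial_ne_zero
  have f3 : (((i + n).factorial : ℕ) : ℝ) ≠ 0 := by exact_mod_cast (i + n).factorial_ne_zero
  field_simp

theorem stmt_16 (d m : ℕ) (hd : 2 ≤ d) (hm : 1 ≤ m) (N : Polynomial ℝ)
    (hN : ∀ x : ℝ, |x| < 1 →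
      N.eval x = (1 - x) ^ (m * d + 1) *
        ∑' n : ℕ, (∏ i ∈ Finset.range d,
          asc ((m : ℝ) + i + 1) n / asc ((i : ℝ) + 1) n) * x ^ n) :
    N.eval 1 = ((m * d).factorial : ℝ) *
      ∏ j ∈ Finset.range d, (j.factorial : ℝ) / ((m + j).factorial : ℝ) := by
  set P : ℝ[X] := ∏ i ∈ range d, (C ((i.factorial : ℝ) / ((m + i).factorial : ℝ)) *
      ∏ j ∈ range m, (X + C ((i : ℝ) + j + 1))) with hPdef
  have hPeval : ∀ n : ℕ, P.eval (n : ℝ)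
      = ∏ i ∈ range d, asc ((m : ℝ) + i + 1) n / asc ((i : ℝ) + 1) n := by
    intro n
    rw [hPdef, eval_prod]
    refine prod_congr rfl fun i _ => ?_
    rw [ratio_eq, eval_mul, eval_C, eval_prod]
    congr 1
    refine prod_congr rfl fun j _ => ?_
    rw [eval_add, eval_X, eval_C]
    ring
  -- structure : P = C c * M with M monic of degree m * d
  set M : ℝ[X] := ∏ i ∈ range d, ∏ j ∈ range m, (X + C ((i : ℝ) + j + 1)) with hMdef
  have hMmonic : M.Monic := by
    apply monic_prod_of_monic
    intro i _
    exact monic_prod_of_monic _ _ fun j _ => monic_X_add_C _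
  have hMdeg : M.natDegree = m * d := by
    rw [hMdef, natDegree_prod_of_monic _ _ (fun i _ =>
      monic_prod_of_monic _ _ fun j _ => monic_X_add_C _)]
    have : ∀ i ∈ range d, (∏ j ∈ range m, (X + C ((i : ℝ) + j + 1))).natDegree = m := by
      intro i _
      rw [natDegree_prod_of_monic _ _ fun j _ => monic_X_add_C _]
      simp only [natDegree_X_add_C]
      simp
    rw [Finset.sum_congr rfl this, Finset.sum_const, smul_eq_mul, Finset.card_range, mul_comm]
  have hPM : P = C (∏ j ∈ range d, (j.factorial : ℝ) / ((m + j).factorial : ℝ)) * M := by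
    rw [hPdef, hMdef, map_prod, ← Finset.prod_mul_distrib]
  have hPdeg : P.natDegree ≤ m * d := by
    rw [hPM]
    exact le_trans (natDegree_C_mul_le _ _) (le_of_eq hMdeg)
  have hPco : P.coeff (m * d)
      = ∏ j ∈ range d, (j.factorial : ℝ) / ((m + j).factorial : ℝ) := by
    rw [hPM, coeff_C_mul, ← hMdeg, hMmonic.coeff_natDegree, mul_one]
  have hT := key (m * d) P hPdeg
  rw [hPco] at hT
  have heq : ∀ x ∈ Set.Ioo (-1 : ℝ) 1,
      (1 - x) ^ (m * d + 1) * ∑' n : ℕ, P.eval (n : ℝ) * x ^ n = N.eval x := by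
    intro x hx
    have hx' : |x| < 1 := abs_lt.mpr ⟨hx.1, hx.2⟩
    rw [hN x hx']
    congr 1
    exact tsum_congr fun n => by rw [hPeval n]
  have hT2 : Tendsto (fun x : ℝ => N.eval x) (𝓝[<] (1 : ℝ))
      (𝓝 (((m * d).factorial : ℝ) * ∏ j ∈ range d, (j.factorial : ℝ) / ((m + j).factorial : ℝ))) :=
    Tendsto.congr' (eventually_of_mem Ioo_mem heq) hT
  have hT3 : Tendsto (fun x : ℝ => N.eval x) (𝓝[<] (1 : ℝ)) (𝓝 (N.eval 1)) :=
    ((N.continuous_aeval).tendsto 1).mono_left nhdsWithin_le_nhds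
  exact tendsto_nhds_unique hT3 hT2
end

section
/- For d ≥ 2 and m ≥ 1, the d-Narayana polynomial is palindromic (self-reciprocal): N_{d,m}(x) = x^{(d-1)(m-1)} · N_{d,m}(1/x), equivalently its coefficients satisfy [xⁿ]N_{d,m} = [x^{(d-1)(m-1)-n}]N_{d,m} for all 0 ≤ n ≤ (d-1)(m-1). -/
open Polynomial Finset fwdDiff

noncomputable def Pf (d m : ℕ) (t : ℝ) : ℝ :=
  ∏ i ∈ Finset.range d, ∏ j ∈ Finset.range m, (t + i + j + 1) / ((i : ℝ) + j + 1)

noncomputable def bcoef (d m : ℕ) (n : ℕ) : ℝ :=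
  ∑ k ∈ Finset.range (m * d + 2),
    if k ≤ n then ((-1 : ℝ) ^ k * ((m * d + 1).choose k)) * Pf d m ((n : ℝ) - k) else 0

lemma asc_split (a : ℝ) (n k : ℕ) : asc a n * asc (a + n) k = asc a (n + k) := by
  have h := congrArg (Polynomial.eval a) (ascPochhammer_mul (S := ℝ) n k)
  simpa [asc, Polynomial.eval_comp] using h

lemma asc_prod (a : ℝ) (k : ℕ) : asc a k = ∏ j ∈ Finset.range k, (a + j) := by
  induction k with
  | zero => simp [asc]
  | succ k ih =>
    rw [asc, ascPochhammer_succ_right, Polynomial.eval_mul, ← asc, ih, Finset.prod_range_succ]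
    simp

lemma asc_ratio (m i n : ℕ) :
    asc ((m : ℝ) + i + 1) n / asc ((i : ℝ) + 1) n
      = ∏ j ∈ Finset.range m, ((n : ℝ) + i + j + 1) / ((i : ℝ) + j + 1) := by
  have hpos : ∀ (b : ℝ) (k : ℕ), 0 < b → 0 < asc b k := fun b k hb =>
    ascPochhammer_pos k b hb
  have h1 : (0:ℝ) < asc ((i : ℝ) + 1) n := hpos _ _ (by positivity)
  have h2 : (0:ℝ) < asc ((i : ℝ) + 1) m := hpos _ _ (by positivity)
  have key : asc ((m : ℝ) + i + 1) n * asc ((i : ℝ) + 1) m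
      = asc ((i : ℝ) + 1) n * asc ((i : ℝ) + 1 + n) m := by
    have e1 := asc_split ((i : ℝ) + 1) n m
    have e2 := asc_split ((i : ℝ) + 1) m n
    have : asc ((i:ℝ) + 1 + m) n = asc ((m:ℝ) + i + 1) n := by ring_nf
    rw [this] at e2
    rw [Nat.add_comm n m] at e1
    nlinarith [e1, e2]
  have : asc ((m : ℝ) + i + 1) n / asc ((i : ℝ) + 1) n
      = asc ((i : ℝ) + 1 + n) m / asc ((i : ℝ) + 1) m := by
    field_simp
    nlinarith [key]
  rw [this, asc_prod, asc_prod, ← Finset.prod_div_distrib]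
  exact Finset.prod_congr rfl fun j _ => by ring_nf

lemma c_eq_Pf (d m n : ℕ) :
    (∏ i ∈ Finset.range d, asc ((m : ℝ) + i + 1) n / asc ((i : ℝ) + 1) n) = Pf d m n := by
  unfold Pf
  exact Finset.prod_congr rfl fun i _ => asc_ratio m i n

lemma Pf_nonneg (d m : ℕ) {t : ℝ} (ht : 0 ≤ t) : 0 ≤ Pf d m t := by
  unfold Pf
  apply Finset.prod_nonneg; intro i _
  apply Finset.prod_nonneg; intro j _
  positivity

lemma Pf_le (d m : ℕ) {t u : ℝ} (ht : 0 ≤ t) (htu : t ≤ u) :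
    Pf d m t ≤ (((d : ℝ) + m) ^ (m * d)) * (u + 1) ^ (m * d) := by
  have hfac : ∀ i ∈ Finset.range d, ∀ j ∈ Finset.range m,
      (t + i + j + 1) / ((i : ℝ) + j + 1) ≤ ((d : ℝ) + m) * (u + 1) := by
    intro i hi j hj
    have hi' : (i : ℝ) ≤ (d : ℝ) - 1 := by
      have := Finset.mem_range.mp hi
      have : (i : ℝ) + 1 ≤ (d : ℝ) := by exact_mod_cast this
      linarith
    have hj' : (j : ℝ) ≤ (m : ℝ) - 1 := by
      have := Finset.mem_range.mp hj
      have : (j : ℝ) + 1 ≤ (m : ℝ) := by exact_mod_cast this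
      linarith
    have hden : (1:ℝ) ≤ (i : ℝ) + j + 1 := by
      have := Nat.cast_nonneg (α := ℝ) i
      have := Nat.cast_nonneg (α := ℝ) j
      linarith
    have : (t + i + j + 1) / ((i : ℝ) + j + 1) ≤ t + i + j + 1 := by
      rw [div_le_iff₀ (by linarith)]
      nlinarith [ht, Nat.cast_nonneg (α := ℝ) i, Nat.cast_nonneg (α := ℝ) j]
    have h2 : t + i + j + 1 ≤ ((d : ℝ) + m) * (u + 1) := by
      have hd1 : (1:ℝ) ≤ (d:ℝ) + m := by
        have : (1:ℝ) ≤ (d:ℝ) + m ∨ True := Or.inr trivial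
        nlinarith [hi', hj', Nat.cast_nonneg (α := ℝ) i, Nat.cast_nonneg (α := ℝ) j]
      nlinarith [htu, ht]
    linarith
  calc Pf d m t ≤ ∏ i ∈ Finset.range d, ∏ j ∈ Finset.range m, (((d : ℝ) + m) * (u + 1)) := by
        unfold Pf
        apply Finset.prod_le_prod
        · intro i _; apply Finset.prod_nonneg; intro j _; positivity
        · intro i hi
          apply Finset.prod_le_prod
          · intro j _; positivity
          · intro j hj; exact hfac i hi j hj
    _ = (((d : ℝ) + m) * (u + 1)) ^ (m * d) := by
        simp [Finset.prod_const, Finset.card_range, ← pow_mul]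
    _ = (((d : ℝ) + m) ^ (m * d)) * (u + 1) ^ (m * d) := by rw [mul_pow]

lemma refl_num (d m : ℕ) (t : ℝ) :
    ∏ i ∈ Finset.range d, ∏ j ∈ Finset.range m, (-((d:ℝ)+m) - t + i + j + 1)
      = (-1:ℝ)^(m*d) * ∏ i ∈ Finset.range d, ∏ j ∈ Finset.range m, (t + i + j + 1) := by
  rw [← Finset.prod_range_reflect
    (fun i => ∏ j ∈ Finset.range m, (-((d:ℝ)+m) - t + i + j + 1)) d]
  have step : ∀ i ∈ Finset.range d,
      (∏ j ∈ Finset.range m, (-((d:ℝ)+m) - t + ((d - 1 - i : ℕ) : ℝ) + j + 1))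
        = ∏ j ∈ Finset.range m, (-(t + i + j + 1)) := by
    intro i hi
    rw [← Finset.prod_range_reflect
      (fun j => (-((d:ℝ)+m) - t + ((d - 1 - i : ℕ) : ℝ) + j + 1)) m]
    apply Finset.prod_congr rfl
    intro j hj
    have hi' : i < d := Finset.mem_range.mp hi
    have hj' : j < m := Finset.mem_range.mp hj
    have e1 : ((d - 1 - i : ℕ) : ℝ) = (d : ℝ) - 1 - i := by
      have : d - 1 - i = d - (1 + i) := by omega
      rw [this, Nat.cast_sub (by omega)]
      push_cast; ring
    have e2 : ((m - 1 - j : ℕ) : ℝ) = (m : ℝ) - 1 - j := by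
      have : m - 1 - j = m - (1 + j) := by omega
      rw [this, Nat.cast_sub (by omega)]
      push_cast; ring
    simp only [e1, e2]
    ring
  rw [Finset.prod_congr rfl step]
  have prodneg : ∀ (s : Finset ℕ) (f : ℕ → ℝ),
      ∏ j ∈ s, (-(f j)) = (-1:ℝ)^s.card * ∏ j ∈ s, f j := by
    intro s f
    rw [← Finset.prod_const, ← Finset.prod_mul_distrib]
    exact Finset.prod_congr rfl fun j _ => (neg_one_mul _).symm
  have step2 : ∀ i ∈ Finset.range d,
      ∏ j ∈ Finset.range m, (-(t + (i:ℝ) + j + 1))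
        = (-1:ℝ)^m * ∏ j ∈ Finset.range m, (t + (i:ℝ) + j + 1) := by
    intro i _
    simpa using prodneg (Finset.range m) (fun j => t + (i:ℝ) + j + 1)
  rw [Finset.prod_congr rfl step2, Finset.prod_mul_distrib, Finset.prod_const,
    Finset.card_range, ← pow_mul]

lemma Pf_reflect (d m : ℕ) (t : ℝ) :
    Pf d m (-((d : ℝ) + m) - t) = (-1 : ℝ) ^ (m * d) * Pf d m t := by
  unfold Pf
  simp only [Finset.prod_div_distrib]
  rw [refl_num]
  ring

lemma Pf_root (d m : ℕ) (hd : 1 ≤ d) (hm : 1 ≤ m) {u : ℕ} (h1 : 1 ≤ u) (h2 : u < d + m) :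
    Pf d m (-(u : ℝ)) = 0 := by
  unfold Pf
  have hi : min (d - 1) (u - 1) ∈ Finset.range d := by
    simp [Finset.mem_range]; omega
  apply Finset.prod_eq_zero hi
  have hj : (u - 1 - min (d - 1) (u - 1)) ∈ Finset.range m := by
    simp [Finset.mem_range]; omega
  apply Finset.prod_eq_zero hj
  have : ((min (d-1) (u-1) : ℕ) : ℝ) + ((u - 1 - min (d - 1) (u - 1) : ℕ) : ℝ) + 1 = (u : ℝ) := by
    have h : (min (d-1) (u-1)) + (u - 1 - min (d - 1) (u - 1)) + 1 = u := by omega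
    exact_mod_cast congrArg (Nat.cast : ℕ → ℝ) h
  rw [_root_.div_eq_zero_iff]
  left
  linarith [this]

lemma fwd_eval (p : ℝ[X]) :
    Δ_[(1:ℝ)] (fun y => p.eval y) = fun y => (p.comp (X + 1) - p).eval y := by
  funext y
  simp [fwdDiff, Polynomial.eval_comp]

lemma fwd_zero : ∀ (n : ℕ) (p : ℝ[X]), p.natDegree < n →
    (fwdDiff (1:ℝ))^[n] (fun y => p.eval y) = fun _ => 0 := by
  intro n
  induction n with
  | zero => intro p h; omega
  | succ n ih =>
    intro p h
    rw [Function.iterate_succ_apply, fwd_eval]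
    set q := p.comp (X + 1) - p with hq
    have hX1 : ((X : ℝ[X]) + 1) = X + C 1 := by simp
    have hXdeg : ((X : ℝ[X]) + 1).natDegree = 1 := by
      rw [hX1]; exact Polynomial.natDegree_X_add_C 1
    have hcase : q = 0 ∨ q.natDegree < p.natDegree := by
      rcases Nat.eq_zero_or_pos p.natDegree with h0 | hpos
      · left
        obtain ⟨a, rfl⟩ := Polynomial.natDegree_eq_zero.mp h0
        simp [hq]
      · right
        have hp0 : p ≠ 0 := fun hh => by simp [hh] at hpos
        have hlead : (p.comp (X + 1)).leadingCoeff = p.leadingCoeff := by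
          rw [Polynomial.leadingCoeff_comp (by rw [hXdeg]; exact one_ne_zero)]
          rw [hX1, Polynomial.leadingCoeff_X_add_C]
          simp
        have hc0 : p.comp (X + 1) ≠ 0 := by
          intro hh
          apply hp0
          apply Polynomial.leadingCoeff_eq_zero.mp
          rw [← hlead, hh, Polynomial.leadingCoeff_zero]
        have hdeg : (p.comp (X + 1)).degree = p.degree := by
          rw [Polynomial.degree_eq_natDegree hc0, Polynomial.degree_eq_natDegree hp0,
            Polynomial.natDegree_comp, hXdeg, Nat.mul_one]
        have hlt : q.degree < p.degree := hdeg ▸ Polynomial.degree_sub_lt hdeg hc0 hlead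
        by_cases hq0 : q = 0
        · rw [hq0]; simpa using hpos
        · exact Polynomial.natDegree_lt_natDegree hq0 hlt
    rcases hcase with h0 | hlt
    · rw [h0]
      simp only [Polynomial.eval_zero]
      exact Function.iterate_fixed (by funext y; simp [fwdDiff]) n
    · exact ih q (by omega)

lemma sumT (d m : ℕ) (x : ℝ) :
    ∑ k ∈ Finset.range (m * d + 2),
      (-1 : ℝ) ^ k * ((m * d + 1).choose k) * Pf d m (x - k) = 0 := by
  classical
  set q : ℝ[X] := ∏ i ∈ Finset.range d, ∏ j ∈ Finset.range m,
    (Polynomial.C (((i:ℝ) + j + 1)⁻¹) * (X + Polynomial.C ((i:ℝ) + j + 1))) with hqdef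
  have heval : ∀ t : ℝ, q.eval t = Pf d m t := by
    intro t
    simp only [hqdef, Polynomial.eval_prod, Polynomial.eval_mul, Polynomial.eval_C,
      Polynomial.eval_add, Polynomial.eval_X, Pf]
    apply Finset.prod_congr rfl; intro i _
    apply Finset.prod_congr rfl; intro j _
    rw [div_eq_mul_inv]; ring
  have hdeg : q.natDegree < m * d + 1 := by
    have h1 : q.natDegree ≤ ∑ i ∈ Finset.range d, ∑ j ∈ Finset.range m, 1 := by
      refine le_trans (Polynomial.natDegree_prod_le _ _) ?_
      apply Finset.sum_le_sum; intro i _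
      refine le_trans (Polynomial.natDegree_prod_le _ _) ?_
      apply Finset.sum_le_sum; intro j _
      refine le_trans (Polynomial.natDegree_mul_le) ?_
      have h2 : (Polynomial.C (((i:ℝ)+j+1)⁻¹)).natDegree = 0 := Polynomial.natDegree_C _
      have h3 := Polynomial.natDegree_X_add_C (R := ℝ) ((i:ℝ)+j+1)
      omega
    simp only [Finset.sum_const, Finset.card_range, smul_eq_mul, mul_one] at h1
    have := Nat.mul_comm d m
    omega
  have hzero := fwd_zero (m * d + 1) q hdeg
  have hsum := fwdDiff_iter_eq_sum_shift (1:ℝ) (fun y => q.eval y) (m * d + 1)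
    (x - (m * d + 1))
  rw [hzero] at hsum
  rw [← Finset.sum_range_reflect]
  have key : ∀ k ∈ Finset.range (m * d + 2),
      (-1 : ℝ) ^ (m * d + 2 - 1 - k) * ((m * d + 1).choose (m * d + 2 - 1 - k))
          * Pf d m (x - ((m * d + 2 - 1 - k : ℕ) : ℝ))
        = ((-1 : ℤ) ^ (m * d + 1 - k) * ((m * d + 1).choose k) : ℤ)
            • (fun y => q.eval y) ((x - (m * d + 1)) + k • (1:ℝ)) := by
    intro k hk
    have hk' : k < m * d + 2 := Finset.mem_range.mp hk
    have e1 : m * d + 2 - 1 - k = m * d + 1 - k := by omega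
    rw [e1]
    have e2 : (m * d + 1).choose (m * d + 1 - k) = (m * d + 1).choose k :=
      Nat.choose_symm (by omega)
    rw [e2]
    have e3 : ((m * d + 1 - k : ℕ) : ℝ) = ((m : ℝ) * d + 1) - k := by
      rw [Nat.cast_sub (by omega)]; push_cast; ring
    rw [e3]
    have earg : x - (((m : ℝ) * d + 1) - (k:ℝ)) = x - ((m:ℝ) * d + 1) + (k:ℝ) := by ring
    rw [earg]
    simp only [zsmul_eq_mul, nsmul_eq_mul, mul_one]
    push_cast
    rw [heval]
  rw [Finset.sum_congr rfl key]
  rw [show m * d + 2 = m * d + 1 + 1 from rfl]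
  simpa using hsum.symm

lemma bcoef_tail (d m : ℕ) (hd : 1 ≤ d) (hm : 1 ≤ m) (n : ℕ) :
    bcoef d m n = ∑ k ∈ Finset.range (m * d + 2),
      if n + (d + m) ≤ k then
        -((-1 : ℝ) ^ k * ((m * d + 1).choose k) * Pf d m ((n : ℝ) - k)) else 0 := by
  have step1 : bcoef d m n = ∑ k ∈ Finset.range (m * d + 2),
      if k < n + (d + m) then
        ((-1 : ℝ) ^ k * ((m * d + 1).choose k)) * Pf d m ((n : ℝ) - k) else 0 := by
    unfold bcoef
    apply Finset.sum_congr rfl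
    intro k hk
    by_cases h1 : k ≤ n
    · rw [if_pos h1, if_pos (by omega)]
    · rw [if_neg h1]
      by_cases h2 : k < n + (d + m)
      · rw [if_pos h2]
        have hroot : Pf d m ((n : ℝ) - k) = 0 := by
          have : ((n : ℝ) - k) = -(((k - n : ℕ) : ℝ)) := by
            rw [Nat.cast_sub (by omega)]; ring
          rw [this]
          exact Pf_root d m hd hm (by omega) (by omega)
        rw [hroot, mul_zero]
      · rw [if_neg h2]
  have h0 := sumT d m (n : ℝ)
  have hdiff : (∑ k ∈ Finset.range (m * d + 2),
      if k < n + (d + m) then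
        ((-1 : ℝ) ^ k * ((m * d + 1).choose k)) * Pf d m ((n : ℝ) - k) else 0)
      - (∑ k ∈ Finset.range (m * d + 2),
        (-1 : ℝ) ^ k * ((m * d + 1).choose k) * Pf d m ((n : ℝ) - k))
      = ∑ k ∈ Finset.range (m * d + 2),
        if n + (d + m) ≤ k then
          -((-1 : ℝ) ^ k * ((m * d + 1).choose k) * Pf d m ((n : ℝ) - k)) else 0 := by
    rw [← Finset.sum_sub_distrib]
    apply Finset.sum_congr rfl
    intro k hk
    by_cases h2 : k < n + (d + m)
    · rw [if_pos h2, if_neg (by omega)]; ring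
    · rw [if_neg h2, if_pos (by omega)]; ring
  rw [step1, ← hdiff, h0, sub_zero]

lemma bcoef_vanish (d m : ℕ) (hd : 1 ≤ d) (hm : 1 ≤ m) {n : ℕ}
    (hn : (d - 1) * (m - 1) < n) : bcoef d m n = 0 := by
  obtain ⟨d', rfl⟩ : ∃ d', d = d' + 1 := ⟨d - 1, by omega⟩
  obtain ⟨m', rfl⟩ : ∃ m', m = m' + 1 := ⟨m - 1, by omega⟩
  have hM : (d' + 1 - 1) * (m' + 1 - 1) + ((d' + 1) + (m' + 1)) = (m' + 1) * (d' + 1) + 1 := by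
    simp; ring
  rw [bcoef_tail _ _ hd hm]
  apply Finset.sum_eq_zero
  intro k hk
  rw [if_neg]
  have := Finset.mem_range.mp hk
  omega

lemma bcoef_symm (d m : ℕ) (hd : 1 ≤ d) (hm : 1 ≤ m) {n : ℕ}
    (hn : n ≤ (d - 1) * (m - 1)) : bcoef d m n = bcoef d m ((d - 1) * (m - 1) - n) := by
  have hM : (d - 1) * (m - 1) + (d + m) = m * d + 1 := by
    obtain ⟨d', rfl⟩ : ∃ d', d = d' + 1 := ⟨d - 1, by omega⟩
    obtain ⟨m', rfl⟩ : ∃ m', m = m' + 1 := ⟨m - 1, by omega⟩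
    simp; ring
  set K := (d - 1) * (m - 1) with hK
  rw [bcoef_tail d m hd hm n, ← Finset.sum_range_reflect]
  unfold bcoef
  apply Finset.sum_congr rfl
  intro k hk
  have hk' : k < m * d + 2 := Finset.mem_range.mp hk
  have e1 : m * d + 2 - 1 - k = m * d + 1 - k := by omega
  rw [e1]
  by_cases hcond : k ≤ K - n
  · rw [if_pos (by omega), if_pos hcond]
    have e2 : (m * d + 1).choose (m * d + 1 - k) = (m * d + 1).choose k :=
      Nat.choose_symm (by omega)
    rw [e2]
    have e3 : ((m * d + 1 - k : ℕ) : ℝ) = ((m : ℝ) * d + 1) - k := by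
      rw [Nat.cast_sub (by omega)]; push_cast; ring
    rw [e3]
    have e4 : ((K - n : ℕ) : ℝ) = (K : ℝ) - n := by
      rw [Nat.cast_sub (by omega)]
    have e5 : ((m : ℝ) * d + 1) = (K : ℝ) + (d + m) := by
      have := congrArg (Nat.cast : ℕ → ℝ) hM
      push_cast at this
      linarith
    have earg : (n : ℝ) - (((m : ℝ) * d + 1) - k)
        = -((d : ℝ) + m) - (((K - n : ℕ) : ℝ) - k) := by
      rw [e4, e5]; ring
    rw [earg, Pf_reflect]
    have hsign : (-1 : ℝ) ^ (m * d + 1 - k) = (-1 : ℝ) ^ (m * d + 1 + k) := by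
      have : m * d + 1 + k = (m * d + 1 - k) + 2 * k := by omega
      rw [this, pow_add, pow_mul]
      simp
    rw [hsign, pow_add, pow_succ]
    have hsq : (-1 : ℝ) ^ (m * d) * (-1 : ℝ) ^ (m * d) = 1 := by
      rw [← pow_add, ← two_mul, pow_mul]
      simp
    linear_combination (((m * d + 1).choose k) : ℝ)
      * Pf d m ((((d - 1) * (m - 1) - n : ℕ) : ℝ) - k) * (-1 : ℝ) ^ k * hsq
  · rw [if_neg (by omega), if_neg hcond]

lemma summ_aux {x : ℝ} (hx : |x| < 1) (p : ℕ) :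
    Summable fun j : ℕ => (((j : ℝ) + 1) ^ p * |x| ^ j) := by
  have hnorm : ‖|x|‖ < 1 := by rwa [Real.norm_eq_abs, abs_abs]
  have base : Summable (fun j : ℕ => ∑ i ∈ Finset.range (p + 1),
      ((j : ℝ) ^ i * |x| ^ j) * (p.choose i)) :=
    summable_sum fun i _ =>
      (summable_pow_mul_geometric_of_norm_lt_one i hnorm).mul_right _
  apply base.congr
  intro j
  rw [add_pow]
  rw [Finset.sum_mul]
  apply Finset.sum_congr rfl
  intro i _
  ring

lemma summ_main (d m : ℕ) {x : ℝ} (hx : |x| < 1) (k : ℕ) (c : ℝ) :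
    Summable fun j : ℕ =>
      (if k ≤ j then c * Pf d m ((j : ℝ) - k) * x ^ j else 0) := by
  apply Summable.of_norm_bounded
    (g := fun j : ℕ => (|c| * ((d : ℝ) + m) ^ (m * d)) * ((((j : ℝ) + 1) ^ (m * d) * |x| ^ j)))
    (((summ_aux hx (m * d))).mul_left _)
  intro j
  by_cases h : k ≤ j
  · rw [if_pos h]
    have harg0 : (0:ℝ) ≤ (j : ℝ) - k := by
      have : (k : ℝ) ≤ j := by exact_mod_cast h
      linarith
    have harg1 : (j : ℝ) - k ≤ j := by
      have : (0:ℝ) ≤ (k : ℝ) := Nat.cast_nonneg k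
      linarith
    have hb := Pf_le d m harg0 harg1
    have hnn := Pf_nonneg d m harg0
    rw [Real.norm_eq_abs, abs_mul, abs_mul, abs_pow, abs_of_nonneg hnn]
    have h1 : |c| * Pf d m ((j : ℝ) - k) ≤ |c| * ((((d : ℝ) + m) ^ (m * d)) * ((j:ℝ) + 1) ^ (m * d)) := by
      apply mul_le_mul_of_nonneg_left _ (abs_nonneg c)
      exact hb
    calc |c| * Pf d m ((j : ℝ) - k) * |x| ^ j
        ≤ (|c| * ((((d : ℝ) + m) ^ (m * d)) * ((j:ℝ) + 1) ^ (m * d))) * |x| ^ j := by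
          apply mul_le_mul_of_nonneg_right h1 (by positivity)
      _ = (|c| * ((d : ℝ) + m) ^ (m * d)) * ((((j : ℝ) + 1) ^ (m * d) * |x| ^ j)) := by ring
  · rw [if_neg h]
    simp
    positivity

lemma summ_base (d m : ℕ) {x : ℝ} (hx : |x| < 1) :
    Summable fun n : ℕ => Pf d m n * x ^ n := by
  have := summ_main d m hx 0 1
  apply this.congr
  intro n
  simp

lemma key_s17 (d m : ℕ) (hd : 1 ≤ d) (hm : 1 ≤ m) {x : ℝ} (hx : |x| < 1) :
    (1 - x) ^ (m * d + 1) * ∑' n : ℕ, Pf d m n * x ^ n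
      = ∑' j : ℕ, bcoef d m j * x ^ j := by
  classical
  set M := m * d + 1 with hM
  set G : ℕ → ℕ → ℝ := fun k j =>
    if k ≤ j then ((-1 : ℝ) ^ k * (M.choose k)) * Pf d m ((j : ℝ) - k) * x ^ j else 0
    with hG
  have hSG : ∀ k, Summable (G k) := fun k => summ_main d m hx k _
  have hbin : (1 - x) ^ M = ∑ k ∈ Finset.range (M + 1), ((-1 : ℝ) ^ k * (M.choose k)) * x ^ k := by
    have h := add_pow (-x) 1 M
    rw [show (1 : ℝ) - x = -x + 1 by ring, h]
    apply Finset.sum_congr rfl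
    intro k _
    rw [neg_pow]
    ring
  rw [hbin, Finset.sum_mul]
  have step1 : ∀ k ∈ Finset.range (M + 1),
      ((-1 : ℝ) ^ k * (M.choose k)) * x ^ k * ∑' n : ℕ, Pf d m n * x ^ n
        = ∑' j : ℕ, G k j := by
    intro k _
    rw [← tsum_mul_left]
    rw [← Summable.sum_add_tsum_nat_add k (hSG k)]
    have hzero : ∑ i ∈ Finset.range k, G k i = 0 := by
      apply Finset.sum_eq_zero
      intro i hi
      rw [hG]
      simp only
      rw [if_neg (by exact Nat.not_le.mpr (Finset.mem_range.mp hi))]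
    rw [hzero, zero_add]
    apply tsum_congr
    intro n
    rw [hG]
    simp only
    rw [if_pos (Nat.le_add_left k n)]
    have : ((n + k : ℕ) : ℝ) - k = (n : ℝ) := by push_cast; ring
    rw [this, pow_add]
    ring
  rw [Finset.sum_congr rfl step1, ← Summable.tsum_finsetSum (fun k _ => hSG k)]
  apply tsum_congr
  intro j
  rw [hG]
  simp only
  unfold bcoef
  rw [Finset.sum_mul]
  rw [show M + 1 = m * d + 2 from rfl]
  apply Finset.sum_congr rfl
  intro k _
  by_cases h : k ≤ j
  · rw [if_pos h, if_pos h]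
  · rw [if_neg h, if_neg h, zero_mul]

lemma hMident (d m : ℕ) (hd : 1 ≤ d) (hm : 1 ≤ m) :
    (d - 1) * (m - 1) + (d + m) = m * d + 1 := by
  obtain ⟨d', rfl⟩ : ∃ d', d = d' + 1 := ⟨d - 1, by omega⟩
  obtain ⟨m', rfl⟩ : ∃ m', m = m' + 1 := ⟨m - 1, by omega⟩
  simp; ring

theorem stmt_17 (d m : ℕ) (hd : 2 ≤ d) (hm : 1 ≤ m) (N : Polynomial ℝ)
    (hN : ∀ x : ℝ, |x| < 1 →
      N.eval x = (1 - x) ^ (m * d + 1) *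
        ∑' n : ℕ, (∏ i ∈ Finset.range d,
          asc ((m : ℝ) + i + 1) n / asc ((i : ℝ) + 1) n) * x ^ n) :
    ∀ n : ℕ, n ≤ (d - 1) * (m - 1) →
      N.coeff n = N.coeff ((d - 1) * (m - 1) - n) := by
  classical
  have hd1 : 1 ≤ d := by omega
  have hMi := hMident d m hd1 hm
  set Q : ℝ[X] := ∑ n ∈ Finset.range (m * d + 2), Polynomial.C (bcoef d m n) * X ^ n with hQ
  have hQcoeff : ∀ n, n < m * d + 2 → Q.coeff n = bcoef d m n := by
    intro n hn
    rw [hQ, Polynomial.finset_sum_coeff]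
    have : ∀ j ∈ Finset.range (m * d + 2),
        (Polynomial.C (bcoef d m j) * X ^ j).coeff n = if n = j then bcoef d m j else 0 := by
      intro j _
      rw [Polynomial.coeff_C_mul, Polynomial.coeff_X_pow]
      by_cases h : n = j <;> simp [h]
    rw [Finset.sum_congr rfl this, Finset.sum_ite_eq]
    simp [Finset.mem_range.mpr hn]
  have hNQ : N = Q := by
    apply Polynomial.eq_of_infinite_eval_eq
    apply Set.Infinite.mono (s := Set.Ioo (-1 : ℝ) 1)
    · intro x hx
      obtain ⟨hx1, hx2⟩ := hx
      have hxabs : |x| < 1 := abs_lt.mpr ⟨hx1, hx2⟩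
      have e0 : (∑' n : ℕ, (∏ i ∈ Finset.range d,
            asc ((m : ℝ) + i + 1) n / asc ((i : ℝ) + 1) n) * x ^ n)
          = ∑' n : ℕ, Pf d m n * x ^ n := by
        apply tsum_congr
        intro n
        rw [c_eq_Pf]
      have e1 : N.eval x = ∑' j : ℕ, bcoef d m j * x ^ j := by
        rw [hN x hxabs, e0, key_s17 d m hd1 hm hxabs]
      have e2 : (∑' j : ℕ, bcoef d m j * x ^ j)
          = ∑ j ∈ Finset.range (m * d + 2), bcoef d m j * x ^ j := by
        apply tsum_eq_sum
        intro j hj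
        have hj' : m * d + 2 ≤ j := by
          by_contra hc
          exact hj (Finset.mem_range.mpr (by omega))
        have : bcoef d m j = 0 :=
          bcoef_vanish d m hd1 hm (by omega)
        rw [this, zero_mul]
      have e3 : Q.eval x = ∑ j ∈ Finset.range (m * d + 2), bcoef d m j * x ^ j := by
        rw [hQ, Polynomial.eval_finset_sum]
        apply Finset.sum_congr rfl
        intro j _
        simp
      simp only [Set.mem_setOf_eq]
      rw [e1, e2, e3]
    · exact Set.Ioo_infinite (by norm_num)
  intro n hn
  rw [hNQ, hQcoeff n (by omega), hQcoeff ((d - 1) * (m - 1) - n) (by omega)]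
  exact bcoef_symm d m hd1 hm hn
end
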